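/- If φ > 0 and η ≥ 1, then for every λ > 0, λ^(2η−1)/(λ^η+φ)² ≤ 1/(4φ^(1/η)) · (2η−1)^(2−1/η)/η² · 4 /4, i.e. sup over λ > 0 of λ^(2η−1)/(λ^η+φ)² ≤ (2η−1)^(2−1/η)/(4η²φ^(1/η)). -/

import Mathlib

open Real

theorem stmt2 (η φ : ℝ) (hη : 1 ≤ η) (hφ : 0 < φ) :
    ∀ lam : ℝ, 0 < lam →
      lam ^ (2 * η - 1) / (lam ^ η + φ) ^ 2 ≤
        (2 * η - 1) ^ (2 - 1 / η) / (4 * η ^ 2 * φ ^ (1 / η)) := by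
  intro lam hlam
  have hη0 : (0:ℝ) < η := lt_of_lt_of_le one_pos hη
  have hA : (0:ℝ) < 2 * η - 1 := by linarith
  have ht : 0 < lam ^ η := rpow_pos_of_pos hlam η
  set t := lam ^ η with htdef
  set A := 2 * η - 1 with hAdef
  have hexp : 2 - 1 / η = A / η := by field_simp; linarith
  have hnum : lam ^ (2 * η - 1) = t ^ (A / η) := by
    rw [htdef, ← Real.rpow_mul hlam.le]
    congr 1
    field_simp
    linarith
  have hw₁ : (0:ℝ) ≤ A / (2 * η) := by positivity
  have hw₂ : (0:ℝ) ≤ 1 / (2 * η) := by positivity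
  have hp₁ : (0:ℝ) ≤ 2 * η * t / A := by positivity
  have hp₂ : (0:ℝ) ≤ 2 * η * φ := by positivity
  have hsum : A / (2 * η) + 1 / (2 * η) = 1 := by
    rw [hAdef]; field_simp; ring
  have amgm := Real.geom_mean_le_arith_mean2_weighted hw₁ hw₂ hp₁ hp₂ hsum
  have harith : A / (2 * η) * (2 * η * t / A) + 1 / (2 * η) * (2 * η * φ) = t + φ := by
    field_simp
  rw [harith] at amgm
  have hgm : (0:ℝ) ≤ (2 * η * t / A) ^ (A / (2 * η)) * (2 * η * φ) ^ (1 / (2 * η)) := by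
    positivity
  have hsq : ((2 * η * t / A) ^ (A / (2 * η)) * (2 * η * φ) ^ (1 / (2 * η))) ^ 2 ≤ (t + φ) ^ 2 :=
    pow_le_pow_left₀ hgm amgm 2
  have e1 : A / (2 * η) * (2:ℝ) = A / η := by field_simp
  have e2 : 1 / (2 * η) * (2:ℝ) = 1 / η := by field_simp
  have hsq' : ((2 * η * t / A) ^ (A / (2 * η)) * (2 * η * φ) ^ (1 / (2 * η))) ^ 2
      = (2 * η * t / A) ^ (A / η) * (2 * η * φ) ^ (1 / η) := by
    rw [mul_pow, ← Real.rpow_natCast ((2 * η * t / A) ^ (A / (2 * η))) 2,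
      ← Real.rpow_natCast ((2 * η * φ) ^ (1 / (2 * η))) 2,
      ← Real.rpow_mul hp₁, ← Real.rpow_mul hp₂]
    push_cast
    rw [e1, e2]
  rw [hsq'] at hsq
  have h1 : A ^ (A / η) * (2 * η * t / A) ^ (A / η) = (2 * η) ^ (A / η) * t ^ (A / η) := by
    rw [← Real.mul_rpow hA.le hp₁, ← Real.mul_rpow (by positivity) ht.le]
    congr 1
    field_simp
  have h2 : (2 * η * φ) ^ (1 / η) = (2 * η) ^ (1 / η) * φ ^ (1 / η) :=
    Real.mul_rpow (by positivity) hφ.le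
  have h3 : (2 * η) ^ (A / η) * (2 * η) ^ (1 / η) = 4 * η ^ 2 := by
    rw [← Real.rpow_add (by positivity)]
    have hAe : A / η + 1 / η = 2 := by rw [hAdef]; field_simp; ring
    rw [hAe, show (2:ℝ) = ((2:ℕ):ℝ) by norm_num, Real.rpow_natCast]
    ring
  have hkey : t ^ (A / η) * (4 * η ^ 2 * φ ^ (1 / η))
      = A ^ (A / η) * ((2 * η * t / A) ^ (A / η) * (2 * η * φ) ^ (1 / η)) := by
    rw [h2, show A ^ (A / η) * ((2 * η * t / A) ^ (A / η) * ((2 * η) ^ (1 / η) * φ ^ (1 / η)))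
        = A ^ (A / η) * (2 * η * t / A) ^ (A / η) * ((2 * η) ^ (1 / η) * φ ^ (1 / η)) from by ring,
      h1, ← h3]
    ring
  rw [hnum, hexp, div_le_div_iff₀ (by positivity) (by positivity), hkey]
  exact mul_le_mul_of_nonneg_left hsq (Real.rpow_nonneg hA.le _)
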